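/- Let C₀ ∈ GL₂(ℂ) be in normal form, i.e. of one of the forms diag(ξ, ξ), diag(ξ₁, ξ₂) with ξ₁ ≠ ξ₂, or [[ξ, ξ], [0, ξ]], with ξ, ξ₁, ξ₂ in the fundamental annulus C_q := {z ∈ ℂ : |q| < |z| ≤ 1}. If Λ ∈ GL₂(O(ℂ*)) satisfies Λ(qx) C₀ = C₀ Λ(x) for all x ≠ 0, then Λ is constant, equal to a matrix L ∈ GL₂(ℂ) that commutes with C₀: L C₀ = C₀ L. -/

import Mathlib

open Matrix

/-- Entrywise holomorphy on `ℂ ∖ {0}` of a matrix-valued function. -/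
def MatHolo (M : ℂ → Matrix (Fin 2) (Fin 2) ℂ) : Prop :=
  ∀ i j : Fin 2, ∀ x : ℂ, x ≠ 0 → DifferentiableAt ℂ (fun y => M y i j) x

/-- `GL₂(O(ℂ*))`: matrices holomorphic on `ℂ*` and invertible at every `x ≠ 0`. -/
def GLO (Λ : ℂ → Matrix (Fin 2) (Fin 2) ℂ) : Prop :=
  MatHolo Λ ∧ ∀ x : ℂ, x ≠ 0 → IsUnit (Λ x).det

/-- Membership in the fundamental annulus `C_q = {z : |q| < |z| ≤ 1}`. -/
def InAnn (q z : ℂ) : Prop := ‖q‖ < ‖z‖ ∧ ‖z‖ ≤ 1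

/-- The three normal forms (trivial, generic, logarithmic) with spectrum in `C_q`. -/
def NormalForm (q : ℂ) (C : Matrix (Fin 2) (Fin 2) ℂ) : Prop :=
  (∃ ξ : ℂ, InAnn q ξ ∧ C = Matrix.diagonal ![ξ, ξ]) ∨
  (∃ ξ1 ξ2 : ℂ, InAnn q ξ1 ∧ InAnn q ξ2 ∧ ξ1 ≠ ξ2 ∧ C = Matrix.diagonal ![ξ1, ξ2]) ∨
  (∃ ξ : ℂ, InAnn q ξ ∧ C = !![ξ, ξ; 0, ξ])

open Filter Set Asymptotics Topology

private lemma zdecomp {r : ℝ} (hr0 : 0 < r) (hr1 : r < 1) {t : ℝ} (ht : 0 < t) :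
    ∃ n : ℤ, r < r ^ n * t ∧ r ^ n * t ≤ 1 := by
  obtain ⟨n, h1, h2⟩ := exists_mem_Ioc_zpow (x := t) (y := r⁻¹) ht ((one_lt_inv₀ hr0).2 hr1)
  refine ⟨n + 1, ?_, ?_⟩
  · have h1' : (r ^ n)⁻¹ < t := by rwa [_root_.inv_zpow] at h1
    have hp : (0:ℝ) < r ^ (n+1) := zpow_pos hr0 _
    calc r = r ^ (n+1) * (r ^ n)⁻¹ := by
            rw [← _root_.zpow_neg, ← zpow_add₀ (ne_of_gt hr0),
              show (n+1) + -n = 1 by ring, zpow_one]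
      _ < r ^ (n+1) * t := by exact (mul_lt_mul_iff_right₀ hp).2 h1'
  · have h2' : t ≤ (r ^ (n+1))⁻¹ := by rwa [_root_.inv_zpow] at h2
    have hp : (0:ℝ) < r ^ (n+1) := zpow_pos hr0 _
    calc r ^ (n+1) * t ≤ r ^ (n+1) * (r ^ (n+1))⁻¹ := (mul_le_mul_iff_right₀ hp).2 h2'
      _ = 1 := mul_inv_cancel₀ (ne_of_gt hp)

private lemma iter_add {q γ : ℂ} (hq : q ≠ 0) {f : ℂ → ℂ}
    (h : ∀ z : ℂ, z ≠ 0 → f (q * z) = f z + γ) :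
    ∀ n : ℤ, ∀ z : ℂ, z ≠ 0 → f (q ^ n * z) = f z + n * γ := by
  intro n
  induction n using Int.induction_on with
  | zero => intro z hz; simp
  | succ k ih =>
      intro z hz
      have e : q ^ ((k:ℤ)+1) * z = q * (q ^ (k:ℤ) * z) := by
        rw [zpow_add₀ hq, zpow_one]; ring
      rw [e, h _ (mul_ne_zero (zpow_ne_zero _ hq) hz), ih z hz]
      push_cast; ring
  | pred k ih =>
      intro z hz
      have e : q * (q ^ (-(k:ℤ)-1) * z) = q ^ (-(k:ℤ)) * z := by
        rw [show (-(k:ℤ)) = 1 + (-(k:ℤ)-1) by ring, zpow_add₀ hq, zpow_one]; ring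
      have h2 := h (q ^ (-(k:ℤ)-1) * z) (mul_ne_zero (zpow_ne_zero _ hq) hz)
      rw [e, ih z hz] at h2
      push_cast at h2 ⊢
      linear_combination -h2

private lemma iter_mul {q c : ℂ} (hq : q ≠ 0) (hc : c ≠ 0) {f : ℂ → ℂ}
    (h : ∀ z : ℂ, z ≠ 0 → f (q * z) = c * f z) :
    ∀ n : ℤ, ∀ z : ℂ, z ≠ 0 → f (q ^ n * z) = c ^ n * f z := by
  intro n
  induction n using Int.induction_on with
  | zero => intro z hz; simp
  | succ k ih =>
      intro z hz
      have e : q ^ ((k:ℤ)+1) * z = q * (q ^ (k:ℤ) * z) := by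
        rw [zpow_add₀ hq, zpow_one]; ring
      rw [e, h _ (mul_ne_zero (zpow_ne_zero _ hq) hz), ih z hz, zpow_add₀ hc, zpow_one]; ring
  | pred k ih =>
      intro z hz
      have e : q * (q ^ (-(k:ℤ)-1) * z) = q ^ (-(k:ℤ)) * z := by
        rw [show (-(k:ℤ)) = 1 + (-(k:ℤ)-1) by ring, zpow_add₀ hq, zpow_one]; ring
      have h2 := h (q ^ (-(k:ℤ)-1) * z) (mul_ne_zero (zpow_ne_zero _ hq) hz)
      rw [e, ih z hz] at h2
      have e2 : c ^ (-(k:ℤ)-1) = c⁻¹ * c ^ (-(k:ℤ)) := by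
        rw [zpow_sub₀ hc, zpow_one, div_eq_mul_inv]; ring
      rw [e2]
      field_simp at h2 ⊢
      linear_combination -h2

private lemma extend0 {f : ℂ → ℂ} (hf : ∀ x : ℂ, x ≠ 0 → DifferentiableAt ℂ f x)
    (h : Tendsto (fun z => z * f z) (𝓝[≠] (0:ℂ)) (𝓝 0)) :
    ∃ g : ℂ → ℂ, Differentiable ℂ g ∧ ∀ z : ℂ, z ≠ 0 → g z = f z := by
  have hd : DifferentiableOn ℂ f ((Set.univ : Set ℂ) \ {0}) := fun x hx =>
    (hf x hx.2).differentiableWithinAt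
  have ho : (fun z => f z - f 0) =o[𝓝[≠] (0:ℂ)] fun z => (z - 0)⁻¹ := by
    rw [Asymptotics.isLittleO_iff_tendsto']
    · have h2 : Tendsto (fun z : ℂ => z * f z - f 0 * z) (𝓝[≠] (0:ℂ)) (𝓝 0) := by
        have h3 : Tendsto (fun z : ℂ => f 0 * z) (𝓝[≠] (0:ℂ)) (𝓝 0) := by
          have c1 : Continuous (fun z : ℂ => f 0 * z) := continuous_const.mul continuous_id
          have := (c1.tendsto (0:ℂ)).mono_left (nhdsWithin_le_nhds (s := {(0:ℂ)}ᶜ))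
          simpa using this
        simpa using h.sub h3
      apply h2.congr'
      filter_upwards [self_mem_nhdsWithin] with z hz
      have hz' : z ≠ 0 := hz
      field_simp
      ring
    · filter_upwards [self_mem_nhdsWithin] with z hz hc
      exact absurd (inv_eq_zero.1 (by simpa using hc)) (sub_ne_zero.2 hz)
  have := Complex.differentiableOn_update_limUnder_of_isLittleO (Filter.univ_mem) hd ho
  exact ⟨_, differentiableOn_univ.1 this, fun z hz => Function.update_of_ne hz _ _⟩

private lemma annbound {q : ℂ} (hq0 : 0 < ‖q‖) {f : ℂ → ℂ}
    (hf : ∀ x : ℂ, x ≠ 0 → DifferentiableAt ℂ f x) :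
    ∃ M : ℝ, 0 ≤ M ∧ ∀ w : ℂ, ‖q‖ < ‖w‖ → ‖w‖ ≤ 1 →
      ‖f w‖ ≤ M := by
  set A : Set ℂ := {w | ‖q‖ ≤ ‖w‖} ∩ {w | ‖w‖ ≤ 1} with hA
  have hAc : IsCompact A := by
    apply Metric.isCompact_of_isClosed_isBounded
    · exact (isClosed_le continuous_const continuous_norm).inter
        (isClosed_le continuous_norm continuous_const)
    · apply (Metric.isBounded_closedBall (x := (0:ℂ)) (r := 1)).subset
      intro w hw
      simpa [Metric.mem_closedBall, Complex.dist_eq] using hw.2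
  have hcont : ContinuousOn f A := fun x hx => by
    have hx0 : x ≠ 0 := by
      intro h0
      rw [h0] at hx
      simpa using lt_of_lt_of_le hq0 hx.1
    exact (hf x hx0).continuousAt.continuousWithinAt
  obtain ⟨M, hM⟩ := hAc.exists_bound_of_continuousOn hcont
  refine ⟨max M 0, le_max_right _ _, fun w h1 h2 => ?_⟩
  have := hM w ⟨le_of_lt h1, h2⟩
  exact le_trans this (le_max_left _ _)
private lemma key_tendsto_add {q γ : ℂ} (hq0 : 0 < ‖q‖) (hq1 : ‖q‖ < 1)
    {f : ℂ → ℂ} {M : ℝ} (hM0 : 0 ≤ M)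
    (hM : ∀ w : ℂ, ‖q‖ < ‖w‖ → ‖w‖ ≤ 1 → ‖f w‖ ≤ M)
    (hit : ∀ n : ℤ, ∀ z : ℂ, z ≠ 0 → f (q ^ n * z) = f z + n * γ) :
    Filter.Tendsto (fun z => z * f z) (𝓝[≠] (0:ℂ)) (𝓝 0) := by
  set r := ‖q‖ with hr
  have hγ0 : 0 ≤ ‖γ‖ := norm_nonneg γ
  rw [Metric.tendsto_nhdsWithin_nhds]
  intro ε hε
  have hseq : Filter.Tendsto (fun k : ℕ => r ^ k * (M + k * ‖γ‖)) Filter.atTop (𝓝 0) := by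
    have t1 : Filter.Tendsto (fun k : ℕ => r ^ k * M) Filter.atTop (𝓝 0) := by
      simpa using (tendsto_pow_atTop_nhds_zero_of_lt_one (le_of_lt hq0) hq1).mul_const M
    have t2 : Filter.Tendsto (fun k : ℕ => ‖γ‖ * (k * r ^ k)) Filter.atTop (𝓝 0) := by
      simpa using (tendsto_self_mul_const_pow_of_lt_one (le_of_lt hq0) hq1).const_mul
        (‖γ‖)
    have h3 : (fun k : ℕ => r ^ k * (M + k * ‖γ‖))
        = fun k : ℕ => r ^ k * M + ‖γ‖ * (k * r ^ k) := by funext k; ring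
    rw [h3]
    simpa using t1.add t2
  obtain ⟨m, hm⟩ := (Metric.tendsto_atTop.mp hseq) ε hε
  refine ⟨r ^ (m + 1), pow_pos hq0 _, ?_⟩
  intro z hz hdist
  have hz0 : z ≠ 0 := hz
  have haz : 0 < ‖z‖ := norm_pos_iff.2 hz0
  rw [Complex.dist_eq, sub_zero] at hdist
  obtain ⟨n, h1, h2⟩ := zdecomp hq0 hq1 haz
  -- show n ≤ -(m+1)
  have hn : n ≤ -(m + 1 : ℤ) := by
    by_contra hcon
    push_neg at hcon
    have hge : -(m+1 : ℤ) + 1 ≤ n := by omega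
    have : r ^ n ≤ r ^ (-(m+1:ℤ)+1) := by
      rcases eq_or_lt_of_le hge with h | h
      · rw [h]
      · exact le_of_lt (zpow_lt_zpow_right_of_lt_one₀ hq0 hq1 h)
    have hb : r ^ n * ‖z‖ < r ^ (-(m+1:ℤ)+1) * r ^ ((m+1:ℕ):ℤ) := by
      calc r ^ n * ‖z‖ ≤ r ^ (-(m+1:ℤ)+1) * ‖z‖ := by
            exact mul_le_mul_of_nonneg_right this (le_of_lt haz)
        _ < r ^ (-(m+1:ℤ)+1) * r ^ ((m+1:ℕ):ℤ) := by
            apply (mul_lt_mul_iff_right₀ (zpow_pos hq0 _)).2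
            rwa [zpow_natCast]
    rw [← zpow_add₀ (ne_of_gt hq0)] at hb
    have : r ^ n * ‖z‖ < r := by
      have e : (-(m+1:ℤ)+1) + ((m+1:ℕ):ℤ) = 1 := by push_cast; ring
      rwa [e, zpow_one] at hb
    exact absurd h1 (not_lt.2 (le_of_lt this))
  set k : ℕ := (-n).toNat with hk
  have hkn : (k : ℤ) = -n := Int.toNat_of_nonneg (by omega)
  have hkm : m ≤ k := by omega
  -- |z| ≤ r ^ k
  have hzle : ‖z‖ ≤ r ^ k := by
    have : ‖z‖ = (r ^ n)⁻¹ * (r ^ n * ‖z‖) := by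
      field_simp
    rw [this]
    calc (r ^ n)⁻¹ * (r ^ n * ‖z‖) ≤ (r ^ n)⁻¹ * 1 := by
          exact mul_le_mul_of_nonneg_left h2 (le_of_lt (inv_pos.2 (zpow_pos hq0 _)))
      _ = r ^ (k:ℤ) := by rw [mul_one, ← _root_.zpow_neg, hkn]
      _ = r ^ k := by rw [zpow_natCast]
  -- |f z| ≤ M + k * |γ|
  have hfb : ‖f z‖ ≤ M + k * ‖γ‖ := by
    have e := hit n z hz0
    have e2 : f z = f (q ^ n * z) - n * γ := by linear_combination -e
    rw [e2]
    calc ‖f (q ^ n * z) - n * γ‖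
        ≤ ‖f (q ^ n * z)‖ + ‖(n:ℂ) * γ‖ := by
          simpa using norm_sub_le (f (q ^ n * z)) ((n:ℂ) * γ)
      _ ≤ M + k * ‖γ‖ := by
          have hw : ‖q ^ n * z‖ = r ^ n * ‖z‖ := by
            rw [norm_mul, norm_zpow]
          have hb1 : ‖f (q ^ n * z)‖ ≤ M := by
            apply hM
            · rwa [hw]
            · rwa [hw]
          have hb2 : ‖(n:ℂ) * γ‖ = k * ‖γ‖ := by
            rw [norm_mul, Complex.norm_intCast]
            congr 1
            rw [← Int.cast_abs]
            have : |n| = (k:ℤ) := by rw [abs_of_nonpos (by omega : n ≤ 0), ← hkn]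
            rw [this]; push_cast; ring
          rw [hb2]
          exact add_le_add_left hb1 _
  rw [Complex.dist_eq, sub_zero, norm_mul]
  have hmain : ‖z‖ * ‖f z‖ ≤ r ^ k * (M + k * ‖γ‖) := by
    apply mul_le_mul hzle hfb (norm_nonneg _) (pow_nonneg (le_of_lt hq0) _)
  have hlast := hm k hkm
  rw [Real.dist_eq, sub_zero] at hlast
  have : r ^ k * (M + k * ‖γ‖) < ε := by
    have hnn : 0 ≤ r ^ k * (M + k * ‖γ‖) := by positivity
    rwa [abs_of_nonneg hnn] at hlast
  exact lt_of_le_of_lt hmain this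
private lemma tendsto_f_punct {f g : ℂ → ℂ} (hg : Differentiable ℂ g)
    (hgf : ∀ z : ℂ, z ≠ 0 → g z = f z) :
    Filter.Tendsto f (𝓝[≠] (0:ℂ)) (𝓝 (g 0)) := by
  have : Filter.Tendsto g (𝓝[≠] (0:ℂ)) (𝓝 (g 0)) :=
    (hg.continuous.tendsto 0).mono_left nhdsWithin_le_nhds
  apply this.congr'
  filter_upwards [self_mem_nhdsWithin] with z hz using hgf z hz

private lemma tendsto_fq_punct {q : ℂ} (hq : q ≠ 0) {f : ℂ → ℂ} {L : ℂ}
    (hf0 : Filter.Tendsto f (𝓝[≠] (0:ℂ)) (𝓝 L)) :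
    Filter.Tendsto (fun z => f (q * z)) (𝓝[≠] (0:ℂ)) (𝓝 L) := by
  apply hf0.comp
  rw [tendsto_nhdsWithin_iff]
  constructor
  · have c1 : Continuous (fun z : ℂ => q * z) := continuous_const.mul continuous_id
    have := (c1.tendsto (0:ℂ)).mono_left (nhdsWithin_le_nhds (s := {(0:ℂ)}ᶜ))
    simpa using this
  · filter_upwards [self_mem_nhdsWithin] with z hz
    exact mul_ne_zero hq hz

private lemma additive_lemma {q γ : ℂ} (hq0 : 0 < ‖q‖) (hq1 : ‖q‖ < 1)
    {f : ℂ → ℂ} (hf : ∀ x : ℂ, x ≠ 0 → DifferentiableAt ℂ f x)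
    (heq : ∀ z : ℂ, z ≠ 0 → f (q * z) = f z + γ) :
    γ = 0 ∧ ∀ z : ℂ, z ≠ 0 → f z = f 1 := by
  have hq : q ≠ 0 := by
    intro h; rw [h] at hq0; simpa using hq0
  obtain ⟨M, hM0, hM⟩ := annbound hq0 hf
  have hit := iter_add hq heq
  have key := key_tendsto_add hq0 hq1 hM0 hM hit
  obtain ⟨g, hg, hgf⟩ := extend0 hf key
  have hf0 := tendsto_f_punct hg hgf
  have hfq := tendsto_fq_punct hq hf0
  have hγ : γ = 0 := by
    have t1 : Filter.Tendsto (fun z => f (q * z) - f z) (𝓝[≠] (0:ℂ)) (𝓝 (g 0 - g 0)) :=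
      hfq.sub hf0
    rw [sub_self] at t1
    have t2 : Filter.Tendsto (fun _ : ℂ => γ) (𝓝[≠] (0:ℂ)) (𝓝 0) := by
      apply t1.congr'
      filter_upwards [self_mem_nhdsWithin] with z hz
      rw [heq z hz]; ring
    exact tendsto_nhds_unique (l := 𝓝[≠] (0:ℂ)) tendsto_const_nhds t2
  refine ⟨hγ, ?_⟩
  subst hγ
  have hconst : ∀ z : ℂ, z ≠ 0 → f z = g 0 := by
    intro z hz
    have seq : Filter.Tendsto (fun n : ℕ => q ^ n * z) Filter.atTop (𝓝[≠] (0:ℂ)) := by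
      rw [tendsto_nhdsWithin_iff]
      constructor
      · have : Filter.Tendsto (fun n : ℕ => q ^ n) Filter.atTop (𝓝 0) :=
          tendsto_pow_atTop_nhds_zero_of_norm_lt_one (by exact hq1)
        simpa using this.mul_const z
      · exact Filter.Eventually.of_forall fun n => mul_ne_zero (pow_ne_zero n hq) hz
    have t3 : Filter.Tendsto (fun n : ℕ => f (q ^ n * z)) Filter.atTop (𝓝 (g 0)) :=
      hf0.comp seq
    have t4 : (fun n : ℕ => f (q ^ n * z)) = fun _ : ℕ => f z := by
      funext n
      have := hit (n : ℤ) z hz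
      rw [zpow_natCast] at this
      simpa using this
    rw [t4] at t3
    exact tendsto_nhds_unique tendsto_const_nhds t3
  intro z hz
  rw [hconst z hz, hconst 1 one_ne_zero]
private lemma key_tendsto_mul {q c : ℂ} (hq0 : 0 < ‖q‖) (hq1 : ‖q‖ < 1)
    (hc1 : ‖q‖ < ‖c‖) (hc2 : ‖c‖ * ‖q‖ < 1)
    {f : ℂ → ℂ} {M : ℝ} (hM0 : 0 ≤ M)
    (hM : ∀ w : ℂ, ‖q‖ < ‖w‖ → ‖w‖ ≤ 1 → ‖f w‖ ≤ M)
    (hit : ∀ n : ℤ, ∀ z : ℂ, z ≠ 0 → f (q ^ n * z) = c ^ n * f z) :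
    Filter.Tendsto (fun z => z * f z) (𝓝[≠] (0:ℂ)) (𝓝 0) := by
  set r := ‖q‖ with hrdef
  set s := ‖c‖ with hsdef
  have hs0 : 0 < s := lt_trans hq0 hc1
  have hρ0 : (0:ℝ) ≤ r * s := le_of_lt (mul_pos hq0 hs0)
  have hρ1 : r * s < 1 := by rw [mul_comm]; exact hc2
  rw [Metric.tendsto_nhdsWithin_nhds]
  intro ε hε
  have hseq : Filter.Tendsto (fun m : ℕ => (r * s) ^ m * M) Filter.atTop (𝓝 0) := by
    simpa using (tendsto_pow_atTop_nhds_zero_of_lt_one hρ0 hρ1).mul_const M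
  obtain ⟨m, hm⟩ := (Metric.tendsto_atTop.mp hseq) ε hε
  refine ⟨r ^ (m + 1), pow_pos hq0 _, ?_⟩
  intro z hz hdist
  have hz0 : z ≠ 0 := hz
  have haz : 0 < ‖z‖ := norm_pos_iff.2 hz0
  rw [Complex.dist_eq, sub_zero] at hdist
  obtain ⟨n, h1, h2⟩ := zdecomp hq0 hq1 haz
  have hn : n ≤ -(m + 1 : ℤ) := by
    by_contra hcon
    push_neg at hcon
    have hge : -(m+1 : ℤ) + 1 ≤ n := by omega
    have hmono : r ^ n ≤ r ^ (-(m+1:ℤ)+1) := by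
      rcases eq_or_lt_of_le hge with h | h
      · rw [h]
      · exact le_of_lt (zpow_lt_zpow_right_of_lt_one₀ hq0 hq1 h)
    have hb : r ^ n * ‖z‖ < r ^ (-(m+1:ℤ)+1) * r ^ ((m+1:ℕ):ℤ) := by
      calc r ^ n * ‖z‖ ≤ r ^ (-(m+1:ℤ)+1) * ‖z‖ :=
            mul_le_mul_of_nonneg_right hmono (le_of_lt haz)
        _ < r ^ (-(m+1:ℤ)+1) * r ^ ((m+1:ℕ):ℤ) := by
            apply (mul_lt_mul_iff_right₀ (zpow_pos hq0 _)).2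
            rwa [zpow_natCast]
    rw [← zpow_add₀ (ne_of_gt hq0)] at hb
    have : r ^ n * ‖z‖ < r := by
      have e : (-(m+1:ℤ)+1) + ((m+1:ℕ):ℤ) = 1 := by push_cast; ring
      rwa [e, zpow_one] at hb
    exact absurd h1 (not_lt.2 (le_of_lt this))
  set k : ℕ := (-n).toNat with hk
  have hkn : (k : ℤ) = -n := Int.toNat_of_nonneg (by omega)
  have hkm : m ≤ k := by omega
  have hzle : ‖z‖ ≤ r ^ k := by
    have e : ‖z‖ = (r ^ n)⁻¹ * (r ^ n * ‖z‖) := by field_simp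
    rw [e]
    calc (r ^ n)⁻¹ * (r ^ n * ‖z‖) ≤ (r ^ n)⁻¹ * 1 :=
          mul_le_mul_of_nonneg_left h2 (le_of_lt (inv_pos.2 (zpow_pos hq0 _)))
      _ = r ^ (k:ℤ) := by rw [mul_one, ← _root_.zpow_neg, hkn]
      _ = r ^ k := by rw [zpow_natCast]
  have hfb : ‖f z‖ ≤ s ^ k * M := by
    have e := hit n z hz0
    have habs : s ^ n * ‖f z‖ ≤ M := by
      have hw : ‖q ^ n * z‖ = r ^ n * ‖z‖ := by
        rw [norm_mul, norm_zpow]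
      have := hM (q ^ n * z) (by rwa [hw]) (by rwa [hw])
      rw [e, norm_mul, norm_zpow] at this
      exact this
    have hsn : (0:ℝ) < s ^ n := zpow_pos hs0 _
    have : ‖f z‖ ≤ M * (s ^ n)⁻¹ := by
      rw [le_mul_inv_iff₀ hsn, mul_comm]
      exact habs
    calc ‖f z‖ ≤ M * (s ^ n)⁻¹ := this
      _ = s ^ k * M := by
          rw [← _root_.zpow_neg, ← hkn, zpow_natCast]; ring
  rw [Complex.dist_eq, sub_zero, norm_mul]
  have hmain : ‖z‖ * ‖f z‖ ≤ (r * s) ^ k * M := by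
    calc ‖z‖ * ‖f z‖ ≤ r ^ k * (s ^ k * M) :=
          mul_le_mul hzle hfb (norm_nonneg _) (pow_nonneg (le_of_lt hq0) _)
      _ = (r * s) ^ k * M := by rw [mul_pow]; ring
  have hlast := hm k hkm
  rw [Real.dist_eq, sub_zero] at hlast
  have hfin : (r * s) ^ k * M < ε := by
    have hnn : (0:ℝ) ≤ (r * s) ^ k * M := by positivity
    rwa [abs_of_nonneg hnn] at hlast
  exact lt_of_le_of_lt hmain hfin

private lemma mult_lemma {q c : ℂ} (hq0 : 0 < ‖q‖) (hq1 : ‖q‖ < 1)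
    (hc1 : ‖q‖ < ‖c‖) (hc2 : ‖c‖ * ‖q‖ < 1)
    (hcne : c ≠ 1)
    {f : ℂ → ℂ} (hf : ∀ x : ℂ, x ≠ 0 → DifferentiableAt ℂ f x)
    (heq : ∀ z : ℂ, z ≠ 0 → f (q * z) = c * f z) :
    ∀ z : ℂ, z ≠ 0 → f z = 0 := by
  have hq : q ≠ 0 := by intro h; rw [h] at hq0; simp at hq0
  have hc0 : c ≠ 0 := by
    intro h; rw [h] at hc1; simp at hc1; exact absurd hc1 (not_lt.2 (le_of_lt hq0))
  obtain ⟨M, hM0, hM⟩ := annbound hq0 hf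
  have hit := iter_mul hq hc0 heq
  have key := key_tendsto_mul hq0 hq1 hc1 hc2 hM0 hM hit
  obtain ⟨g, hg, hgf⟩ := extend0 hf key
  have hf0 := tendsto_f_punct hg hgf
  have hfq := tendsto_fq_punct hq hf0
  -- g 0 = 0
  have hg0 : g 0 = 0 := by
    have t1 : Filter.Tendsto (fun z => c * f z) (𝓝[≠] (0:ℂ)) (𝓝 (c * g 0)) := hf0.const_mul c
    have t2 : Filter.Tendsto (fun z => f (q * z)) (𝓝[≠] (0:ℂ)) (𝓝 (c * g 0)) := by
      apply t1.congr'
      filter_upwards [self_mem_nhdsWithin] with z hz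
      rw [heq z hz]
    have e : g 0 = c * g 0 := tendsto_nhds_unique hfq t2
    have e2 : (c - 1) * g 0 = 0 := by linear_combination -e
    rcases mul_eq_zero.1 e2 with h | h
    · exact absurd (sub_eq_zero.1 h) hcne
    · exact h
  -- relation for g everywhere
  have grel : ∀ z : ℂ, g (q * z) = c * g z := by
    intro z
    by_cases hz : z = 0
    · rw [hz, mul_zero, hg0, mul_zero]
    · rw [hgf _ (mul_ne_zero hq hz), hgf z hz]
      exact heq z hz
  have gnat : ∀ n : ℕ, ∀ z : ℂ, g (q ^ n * z) = c ^ n * g z := by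
    intro n
    induction n with
    | zero => intro z; simp
    | succ n ih =>
        intro z
        have e : q ^ (n+1) * z = q * (q ^ n * z) := by ring
        rw [e, grel, ih, pow_succ]
        ring
  -- dslope bound
  have hD : Differentiable ℂ (dslope g 0) :=
    differentiableOn_univ.1 ((Complex.differentiableOn_dslope Filter.univ_mem).2
      hg.differentiableOn)
  obtain ⟨K, hK⟩ := (isCompact_closedBall (0:ℂ) 1).exists_bound_of_continuousOn
    hD.continuous.continuousOn
  have hK0 : 0 ≤ K := le_trans (norm_nonneg _) (hK 0 (Metric.mem_closedBall_self zero_le_one))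
  have gbound : ∀ w : ℂ, ‖w‖ ≤ 1 → ‖g w‖ ≤ K * ‖w‖ := by
    intro w hw
    have e : g w = w * dslope g 0 w := by
      by_cases hw0 : w = 0
      · rw [hw0, hg0, zero_mul]
      · rw [dslope_of_ne g hw0, slope_def_field, hg0, sub_zero, sub_zero]
        field_simp
    rw [e, norm_mul]
    have : ‖dslope g 0 w‖ ≤ K := by
      have := hK w (by simpa [Metric.mem_closedBall, Complex.dist_eq] using hw)
      exact this
    calc ‖w‖ * ‖dslope g 0 w‖ ≤ ‖w‖ * K :=
          mul_le_mul_of_nonneg_left this (norm_nonneg _)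
      _ = K * ‖w‖ := by ring
  -- conclude g ≡ 0
  set r := ‖q‖ with hrdef
  set s := ‖c‖ with hsdef
  have hs0 : 0 < s := lt_trans hq0 hc1
  have gzero : ∀ z : ℂ, g z = 0 := by
    intro z
    by_cases hz : z = 0
    · rw [hz, hg0]
    · have haz : 0 < ‖z‖ := norm_pos_iff.2 hz
      have hratio0 : (0:ℝ) ≤ r / s := div_nonneg (le_of_lt hq0) (le_of_lt hs0)
      have hratio1 : r / s < 1 := (div_lt_one hs0).2 hc1
      have hbnd : ∀ᶠ n : ℕ in Filter.atTop,
          ‖g z‖ ≤ K * ‖z‖ * (r / s) ^ n := by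
        have hev : ∀ᶠ n : ℕ in Filter.atTop, r ^ n * ‖z‖ ≤ 1 := by
          have t5 : Filter.Tendsto (fun n : ℕ => r ^ n * ‖z‖)
              Filter.atTop (𝓝 0) := by
            simpa using (tendsto_pow_atTop_nhds_zero_of_lt_one (le_of_lt hq0) hq1).mul_const
              (‖z‖)
          exact t5.eventually_le_const (by norm_num : (0:ℝ) < 1)
        filter_upwards [hev] with n hn
        have h6 : ‖g (q ^ n * z)‖ ≤ K * (r ^ n * ‖z‖) := by
          have := gbound (q ^ n * z) (by rwa [norm_mul, norm_pow])
          rwa [norm_mul, norm_pow] at this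
        rw [gnat n z, norm_mul, norm_pow] at h6
        have hsn : (0:ℝ) < s ^ n := pow_pos hs0 _
        rw [div_pow, ← mul_div_assoc, le_div_iff₀ hsn]
        calc ‖g z‖ * s ^ n = s ^ n * ‖g z‖ := by ring
          _ ≤ K * (r ^ n * ‖z‖) := h6
          _ = K * ‖z‖ * r ^ n := by ring
      have hlim : Filter.Tendsto (fun n : ℕ => K * ‖z‖ * (r / s) ^ n)
          Filter.atTop (𝓝 0) := by
        simpa using (tendsto_pow_atTop_nhds_zero_of_lt_one hratio0 hratio1).const_mul
          (K * ‖z‖)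
      have : ‖g z‖ ≤ 0 := ge_of_tendsto hlim hbnd
      have : ‖g z‖ = 0 := le_antisymm this (norm_nonneg _)
      exact norm_eq_zero.1 this
  intro z hz
  rw [← hgf z hz, gzero z]
private lemma inAnn_ne_zero {q ξ : ℂ} (hq0 : 0 < ‖q‖) (h : InAnn q ξ) : ξ ≠ 0 := by
  intro h0
  rw [h0] at h
  have h1 := h.1
  simp at h1
  linarith

/-- An automorphism of a matrix in normal form is a constant matrix commuting with it. -/
theorem stmt14 (q : ℂ) (hq0 : 0 < ‖q‖) (hq1 : ‖q‖ < 1)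
    (C0 : Matrix (Fin 2) (Fin 2) ℂ) (hC0 : NormalForm q C0)
    (Λ : ℂ → Matrix (Fin 2) (Fin 2) ℂ) (hΛ : GLO Λ)
    (hcomm : ∀ x : ℂ, x ≠ 0 → Λ (q * x) * C0 = C0 * Λ x) :
    ∃ L : Matrix (Fin 2) (Fin 2) ℂ, IsUnit L.det ∧ (∀ x : ℂ, x ≠ 0 → Λ x = L) ∧
      L * C0 = C0 * L := by
  have hq : q ≠ 0 := by intro h; rw [h] at hq0; simp at hq0
  obtain ⟨hHolo, hUnit⟩ := hΛ
  suffices hconst : ∀ x : ℂ, x ≠ 0 → Λ x = Λ 1 by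
    refine ⟨Λ 1, hUnit 1 one_ne_zero, hconst, ?_⟩
    have h := hcomm 1 one_ne_zero
    rw [mul_one, hconst q hq] at h
    exact h
  have E : ∀ x : ℂ, x ≠ 0 → ∀ i j : Fin 2, (Λ (q * x) * C0) i j = (C0 * Λ x) i j := by
    intro x hx i j; rw [hcomm x hx]
  rcases hC0 with ⟨ξ, hξ, hC⟩ | ⟨ξ1, ξ2, hξ1, hξ2, hne, hC⟩ | ⟨ξ, hξ, hC⟩
  · -- trivial case
    subst hC
    have hξ0 : ξ ≠ 0 := inAnn_ne_zero hq0 hξ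
    intro x hx
    ext i j
    refine (additive_lemma (γ := 0) hq0 hq1 (hHolo i j) (fun z hz => ?_)).2 x hx
    have h := E z hz i j
    rw [Matrix.mul_diagonal, Matrix.diagonal_mul] at h
    have hvj : (![ξ, ξ] : Fin 2 → ℂ) j = ξ := by fin_cases j <;> simp
    have hvi : (![ξ, ξ] : Fin 2 → ℂ) i = ξ := by fin_cases i <;> simp
    rw [hvj, hvi] at h
    rw [add_zero]
    exact mul_left_cancel₀ hξ0 (by linear_combination h)
  · -- generic case
    subst hC
    have h10 : ξ1 ≠ 0 := inAnn_ne_zero hq0 hξ1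
    have h20 : ξ2 ≠ 0 := inAnn_ne_zero hq0 hξ2
    have ha1 : 0 < ‖ξ1‖ := norm_pos_iff.2 h10
    have ha2 : 0 < ‖ξ2‖ := norm_pos_iff.2 h20
    -- entrywise relations
    have Eij : ∀ z : ℂ, z ≠ 0 → ∀ i j : Fin 2,
        Λ (q * z) i j * (![ξ1, ξ2] : Fin 2 → ℂ) j = (![ξ1, ξ2] : Fin 2 → ℂ) i * Λ z i j := by
      intro z hz i j
      have h := E z hz i j
      rwa [Matrix.mul_diagonal, Matrix.diagonal_mul] at h
    have hd1 : ∀ x : ℂ, x ≠ 0 → Λ x 0 0 = Λ 1 0 0 := by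
      refine (additive_lemma (γ := 0) hq0 hq1 (hHolo 0 0) (fun z hz => ?_)).2
      have h := Eij z hz 0 0
      simp only [Matrix.cons_val_zero] at h
      rw [add_zero]
      exact mul_left_cancel₀ h10 (by linear_combination h)
    have hd2 : ∀ x : ℂ, x ≠ 0 → Λ x 1 1 = Λ 1 1 1 := by
      refine (additive_lemma (γ := 0) hq0 hq1 (hHolo 1 1) (fun z hz => ?_)).2
      have h := Eij z hz 1 1
      simp only [Matrix.cons_val_one, Matrix.head_cons, Matrix.cons_val_zero] at h
      rw [add_zero]
      exact mul_left_cancel₀ h20 (by linear_combination h)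
    have habs12 : ‖ξ1 / ξ2‖ = ‖ξ1‖ / ‖ξ2‖ := norm_div _ _
    have habs21 : ‖ξ2 / ξ1‖ = ‖ξ2‖ / ‖ξ1‖ := norm_div _ _
    have hup : ∀ x : ℂ, x ≠ 0 → Λ x 0 1 = 0 := by
      refine mult_lemma (c := ξ1 / ξ2) hq0 hq1 ?_ ?_ ?_ (hHolo 0 1) (fun z hz => ?_)
      · rw [habs12]
        calc ‖q‖ < ‖ξ1‖ := hξ1.1
          _ ≤ ‖ξ1‖ / ‖ξ2‖ := by
              rw [le_div_iff₀ ha2]; nlinarith [hξ2.2]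
      · rw [habs12, div_mul_eq_mul_div, div_lt_one ha2]
        nlinarith [hξ1.2, hξ2.1]
      · intro h
        exact hne ((div_eq_one_iff_eq h20).1 h)
      · have h := Eij z hz 0 1
        simp only [Matrix.cons_val_zero, Matrix.cons_val_one, Matrix.head_cons] at h
        field_simp
        linear_combination h
    have hlo : ∀ x : ℂ, x ≠ 0 → Λ x 1 0 = 0 := by
      refine mult_lemma (c := ξ2 / ξ1) hq0 hq1 ?_ ?_ ?_ (hHolo 1 0) (fun z hz => ?_)
      · rw [habs21]
        calc ‖q‖ < ‖ξ2‖ := hξ2.1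
          _ ≤ ‖ξ2‖ / ‖ξ1‖ := by
              rw [le_div_iff₀ ha1]; nlinarith [hξ1.2]
      · rw [habs21, div_mul_eq_mul_div, div_lt_one ha1]
        nlinarith [hξ2.2, hξ1.1]
      · intro h
        exact hne ((div_eq_one_iff_eq h10).1 h).symm
      · have h := Eij z hz 1 0
        simp only [Matrix.cons_val_zero, Matrix.cons_val_one, Matrix.head_cons] at h
        field_simp
        linear_combination h
    intro x hx
    ext i j
    fin_cases i <;> fin_cases j
    · exact hd1 x hx
    · show Λ x 0 1 = Λ 1 0 1
      rw [hup x hx, hup 1 one_ne_zero]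
    · show Λ x 1 0 = Λ 1 1 0
      rw [hlo x hx, hlo 1 one_ne_zero]
    · exact hd2 x hx
  · -- logarithmic case
    subst hC
    have hξ0 : ξ ≠ 0 := inAnn_ne_zero hq0 hξ
    -- entry equations
    have e00 : ∀ z : ℂ, z ≠ 0 → Λ (q * z) 0 0 = Λ z 0 0 + Λ z 1 0 := by
      intro z hz
      have h := E z hz 0 0
      simp [Matrix.mul_apply, Fin.sum_univ_two] at h
      exact mul_left_cancel₀ hξ0 (by linear_combination h)
    have e01 : ∀ z : ℂ, z ≠ 0 → Λ (q * z) 0 0 + Λ (q * z) 0 1 = Λ z 0 1 + Λ z 1 1 := by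
      intro z hz
      have h := E z hz 0 1
      simp [Matrix.mul_apply, Fin.sum_univ_two] at h
      exact mul_left_cancel₀ hξ0 (by linear_combination h)
    have e10 : ∀ z : ℂ, z ≠ 0 → Λ (q * z) 1 0 = Λ z 1 0 := by
      intro z hz
      have h := E z hz 1 0
      simp [Matrix.mul_apply, Fin.sum_univ_two] at h
      exact mul_left_cancel₀ hξ0 (by linear_combination h)
    have e11 : ∀ z : ℂ, z ≠ 0 → Λ (q * z) 1 0 + Λ (q * z) 1 1 = Λ z 1 1 := by
      intro z hz
      have h := E z hz 1 1
      simp [Matrix.mul_apply, Fin.sum_univ_two] at h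
      exact mul_left_cancel₀ hξ0 (by linear_combination h)
    -- c entry constant
    have hCc : ∀ x : ℂ, x ≠ 0 → Λ x 1 0 = Λ 1 1 0 :=
      (additive_lemma (γ := 0) hq0 hq1 (hHolo 1 0) (fun z hz => by
        rw [add_zero]; exact e10 z hz)).2
    -- a entry
    have hAdd := additive_lemma (γ := Λ 1 1 0) hq0 hq1 (hHolo 0 0) (fun z hz => by
      rw [e00 z hz, hCc z hz])
    obtain ⟨hγ0, hA⟩ := hAdd
    have hCc0 : ∀ x : ℂ, x ≠ 0 → Λ x 1 0 = 0 := by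
      intro x hx; rw [hCc x hx, hγ0]
    -- d entry
    have hD : ∀ x : ℂ, x ≠ 0 → Λ x 1 1 = Λ 1 1 1 :=
      (additive_lemma (γ := 0) hq0 hq1 (hHolo 1 1) (fun z hz => by
        rw [add_zero]
        have h := e11 z hz
        rw [hCc0 (q * z) (mul_ne_zero hq hz)] at h
        linear_combination h)).2
    -- b entry
    have hB : ∀ x : ℂ, x ≠ 0 → Λ x 0 1 = Λ 1 0 1 :=
      (additive_lemma (γ := Λ 1 1 1 - Λ 1 0 0) hq0 hq1 (hHolo 0 1) (fun z hz => by
        have h := e01 z hz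
        rw [hA (q * z) (mul_ne_zero hq hz), hD z hz] at h
        linear_combination h)).2
    intro x hx
    ext i j
    fin_cases i <;> fin_cases j
    · exact hA x hx
    · exact hB x hx
    · show Λ x 1 0 = Λ 1 1 0
      rw [hCc0 x hx, hCc0 1 one_ne_zero]
    · exact hD x hx
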